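/- Fortin–Soulié linear dependence relation for quadratic polynomials: let V₁, V₂, V₃ be affinely independent points of ℝ². For an ordered pair (X, Y) of distinct vertices, define the two Gauss–Legendre points of the edge from X to Y as g⁻(X,Y) = (X+Y)/2 − (Y−X)/(2√3) and g⁺(X,Y) = (X+Y)/2 + (Y−X)/(2√3). Then for every polynomial q : ℝ² → ℝ of total degree at most 2, summing over the cyclically oriented edges (V₁,V₂), (V₂,V₃), (V₃,V₁): [q(g⁺(V₁,V₂)) − q(g⁻(V₁,V₂))] + [q(g⁺(V₂,V₃)) − q(g⁻(V₂,V₃))] + [q(g⁺(V₃,V₁)) − q(g⁻(V₃,V₁))] = 0. -/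
import Mathlib

open MeasureTheory Polynomial

/-- The "minus" Gauss–Legendre point of the edge from `X` to `Y`. -/
noncomputable def gaussMinus (X Y : Fin 2 → ℝ) : Fin 2 → ℝ :=
  (1 / 2 : ℝ) • (X + Y) - (1 / (2 * Real.sqrt 3)) • (Y - X)

/-- The "plus" Gauss–Legendre point of the edge from `X` to `Y`. -/
noncomputable def gaussPlus (X Y : Fin 2 → ℝ) : Fin 2 → ℝ :=
  (1 / 2 : ℝ) • (X + Y) + (1 / (2 * Real.sqrt 3)) • (Y - X)

lemma gauss_monomial (V₁ V₂ V₃ : Fin 2 → ℝ) (n0 n1 : ℕ) (h : n0 + n1 ≤ 2) :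
    (gaussPlus V₁ V₂ 0 ^ n0 * gaussPlus V₁ V₂ 1 ^ n1
      - gaussMinus V₁ V₂ 0 ^ n0 * gaussMinus V₁ V₂ 1 ^ n1)
    + (gaussPlus V₂ V₃ 0 ^ n0 * gaussPlus V₂ V₃ 1 ^ n1
      - gaussMinus V₂ V₃ 0 ^ n0 * gaussMinus V₂ V₃ 1 ^ n1)
    + (gaussPlus V₃ V₁ 0 ^ n0 * gaussPlus V₃ V₁ 1 ^ n1
      - gaussMinus V₃ V₁ 0 ^ n0 * gaussMinus V₃ V₁ 1 ^ n1) = 0 := by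
  have h0 : n0 ≤ 2 := le_trans (Nat.le_add_right _ _) h
  have h1 : n1 ≤ 2 := le_trans (Nat.le_add_left _ _) h
  simp only [gaussPlus, gaussMinus, Pi.add_apply, Pi.sub_apply, Pi.smul_apply, smul_eq_mul]
  interval_cases n0 <;> interval_cases n1 <;> first | ring1 | exact absurd h (by norm_num)

/-- Fortin–Soulié linear dependence relation: for any quadratic polynomial, the cyclic sum
over the oriented edges of the differences of the values at the two Gauss–Legendre
points of each edge vanishes. -/
theorem fortin_soulie_relation
    (V₁ V₂ V₃ : Fin 2 → ℝ) (hV : AffineIndependent ℝ ![V₁, V₂, V₃])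
    (q : MvPolynomial (Fin 2) ℝ) (hq : q.totalDegree ≤ 2) :
    (MvPolynomial.eval (gaussPlus V₁ V₂) q - MvPolynomial.eval (gaussMinus V₁ V₂) q) +
    (MvPolynomial.eval (gaussPlus V₂ V₃) q - MvPolynomial.eval (gaussMinus V₂ V₃) q) +
    (MvPolynomial.eval (gaussPlus V₃ V₁) q - MvPolynomial.eval (gaussMinus V₃ V₁) q)
      = 0 := by
  rw [← MvPolynomial.support_sum_monomial_coeff q]
  simp only [map_sum, MvPolynomial.eval_monomial]
  simp only [← Finset.sum_sub_distrib, ← Finset.sum_add_distrib]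
  refine Finset.sum_eq_zero fun v hv => ?_
  have hdeg : v 0 + v 1 ≤ 2 := by
    have h1 : v.sum (fun _ e => e) ≤ q.totalDegree := MvPolynomial.le_totalDegree hv
    have h2 : v.sum (fun _ e => e) = v 0 + v 1 := by
      rw [Finsupp.sum_fintype _ _ fun _ => rfl, Fin.sum_univ_two]
    omega
  have key := gauss_monomial V₁ V₂ V₃ (v 0) (v 1) hdeg
  simp only [Finsupp.prod_pow, Fin.prod_univ_two]
  linear_combination (MvPolynomial.coeff v q) * key
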